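/- arXiv:1712.09529 — 2 statements merged into one kernel-verified Lean document; each statement's English description precedes it below -/
import Mathlib

section
/- There does not exist a strictly Deza graph with parameters (n, k, k − 1, k − 2), for any n and k. -/
open Finset SimpleGraph

universe u v

/-- The number of common neighbours of two vertices. -/
def commonNbrs {V : Type u} [Fintype V] [DecidableEq V] (G : SimpleGraph V)
    [DecidableRel G.Adj] (x y : V) : ℕ :=
  (G.neighborFinset x ∩ G.neighborFinset y).card

/-- `G` is a Deza graph with parameters `(n, k, b, a)`: a nonempty `k`-regular graph on `n`
vertices in which any two distinct vertices have either `b` or `a` common neighbours,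
where `b ≥ a`. -/
def IsDezaGraph {V : Type u} [Fintype V] [DecidableEq V] (G : SimpleGraph V)
    [DecidableRel G.Adj] (n k b a : ℕ) : Prop :=
  G ≠ ⊥ ∧ Fintype.card V = n ∧ G.IsRegularOfDegree k ∧ a ≤ b ∧
    ∀ x y : V, x ≠ y → commonNbrs G x y = b ∨ commonNbrs G x y = a

/-- `G` is a strictly Deza graph with parameters `(n, k, b, a)`: a Deza graph of
diameter 2 that is not strongly regular. -/
def IsStrictlyDezaGraph {V : Type u} [Fintype V] [DecidableEq V] (G : SimpleGraph V)
    [DecidableRel G.Adj] (n k b a : ℕ) : Prop :=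
  IsDezaGraph G n k b a ∧ G.Connected ∧ (∀ x y : V, G.dist x y ≤ 2) ∧
    (∃ x y : V, G.dist x y = 2) ∧ ¬ ∃ ℓ μ : ℕ, G.IsSRGWith n k ℓ μ

/-- `B(v)`: the set of vertices `u ≠ v` having exactly `b` common neighbours with `v`. -/
def dezaB {V : Type u} [Fintype V] [DecidableEq V] (G : SimpleGraph V)
    [DecidableRel G.Adj] (b : ℕ) (v : V) : Finset V :=
  univ.filter fun u => u ≠ v ∧ commonNbrs G u v = b

/-- `A(v)`: the set of vertices `u ≠ v` having exactly `a` common neighbours with `v`. -/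
def dezaA {V : Type u} [Fintype V] [DecidableEq V] (G : SimpleGraph V)
    [DecidableRel G.Adj] (a : ℕ) (v : V) : Finset V :=
  univ.filter fun u => u ≠ v ∧ commonNbrs G u v = a

/-- `B[v] = B(v) ∪ {v}`. -/
def dezaBc {V : Type u} [Fintype V] [DecidableEq V] (G : SimpleGraph V)
    [DecidableRel G.Adj] (b : ℕ) (v : V) : Finset V :=
  insert v (dezaB G b v)

/-- A vertex `v` is of type (A) if `B(v) ∩ N(v) = ∅`. -/
def IsTypeA {V : Type u} [Fintype V] [DecidableEq V] (G : SimpleGraph V)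
    [DecidableRel G.Adj] (b : ℕ) (v : V) : Prop :=
  dezaB G b v ∩ G.neighborFinset v = ∅

/-- A vertex `v` is of type (B) if `B(v) ⊆ N(v)`. -/
def IsTypeB {V : Type u} [Fintype V] [DecidableEq V] (G : SimpleGraph V)
    [DecidableRel G.Adj] (b : ℕ) (v : V) : Prop :=
  dezaB G b v ⊆ G.neighborFinset v

/-- A vertex `v` is of type (C) if `|B(v) ∩ N(v)| = 1`. -/
def IsTypeC {V : Type u} [Fintype V] [DecidableEq V] (G : SimpleGraph V)
    [DecidableRel G.Adj] (b : ℕ) (v : V) : Prop :=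
  (dezaB G b v ∩ G.neighborFinset v).card = 1

/-- A vertex `x` of type (A) is of type (A1) if there exists `y ∈ N(x)` with
`N(x) \ N(xᵢ) = {y}` for every `xᵢ ∈ B(x)`. -/
def IsTypeA1 {V : Type u} [Fintype V] [DecidableEq V] (G : SimpleGraph V)
    [DecidableRel G.Adj] (b : ℕ) (x : V) : Prop :=
  IsTypeA G b x ∧ ∃ y ∈ G.neighborFinset x,
    ∀ xi ∈ dezaB G b x, G.neighborFinset x \ G.neighborFinset xi = {y}

/-- A vertex `x` of type (A) is of type (A2) if there exists `z ∉ N[x]` with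
`N(xᵢ) \ N(x) = {z}` for every `xᵢ ∈ B(x)`. -/
def IsTypeA2 {V : Type u} [Fintype V] [DecidableEq V] (G : SimpleGraph V)
    [DecidableRel G.Adj] (b : ℕ) (x : V) : Prop :=
  IsTypeA G b x ∧ ∃ z ∉ insert x (G.neighborFinset x),
    ∀ xi ∈ dezaB G b x, G.neighborFinset xi \ G.neighborFinset x = {z}

/-- The complete multipartite graph with `m` parts of size `t`. -/
def completeMultipartiteGr (m t : ℕ) : SimpleGraph (Fin m × Fin t) where
  Adj u v := u.1 ≠ v.1
  symm := ⟨fun _ _ h => Ne.symm h⟩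
  loopless := ⟨fun _ h => h rfl⟩

/-- The 2-clique extension of a graph `H`: vertices `(u, i)` and `(v, j)` are adjacent
iff `u ~ v` in `H`, or `u = v` and `i ≠ j`. -/
def cliqueExt2 {W : Type v} (H : SimpleGraph W) : SimpleGraph (W × Fin 2) where
  Adj u v := H.Adj u.1 v.1 ∨ (u.1 = v.1 ∧ u.2 ≠ v.2)
  symm := by
    constructor
    intro u v h
    rcases h with h | ⟨h1, h2⟩
    · exact Or.inl h.symm
    · exact Or.inr ⟨h1.symm, h2.symm⟩
  loopless := by
    constructor
    intro u h
    rcases h with h | ⟨_, h2⟩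
    · exact H.irrefl h
    · exact h2 rfl


section Helpers
variable {V : Type u} [Fintype V] [DecidableEq V] (G : SimpleGraph V) [DecidableRel G.Adj]

set_option linter.unusedSectionVars false

lemma commonNbrs_comm (x y : V) : commonNbrs G x y = commonNbrs G y x := by
  rw [commonNbrs, commonNbrs, inter_comm]

lemma mem_common {x y u : V} : u ∈ G.neighborFinset x ∩ G.neighborFinset y ↔ G.Adj x u ∧ G.Adj y u := by
  simp [mem_inter, mem_neighborFinset]

lemma common_eq_card (x y : V) :
    Fintype.card (G.commonNeighbors x y) = commonNbrs G x y := by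
  rw [commonNbrs, ← Set.toFinset_card]
  congr 1
  ext u
  rw [Set.mem_toFinset]
  simp [SimpleGraph.commonNeighbors, mem_neighborFinset]

-- twin lemma
lemma twin {k : ℕ} (hreg : G.IsRegularOfDegree k) {x y : V} (hadj : G.Adj x y)
    (hc : commonNbrs G x y + 1 = k) : ∀ w, G.Adj x w → w ≠ y → G.Adj y w := by
  intro w hw hwy
  have hsub : G.neighborFinset x ∩ G.neighborFinset y ⊆ (G.neighborFinset x).erase y := by
    intro u hu
    rw [mem_erase]
    rcases (mem_common G).1 hu with ⟨h1, h2⟩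
    exact ⟨fun h => G.irrefl (h ▸ h2), (mem_neighborFinset _ _ _).2 h1⟩
  have hcard : ((G.neighborFinset x).erase y).card ≤ (G.neighborFinset x ∩ G.neighborFinset y).card := by
    rw [card_erase_of_mem ((mem_neighborFinset _ _ _).2 hadj)]
    have hk : (G.neighborFinset x).card = k := by
      rw [card_neighborFinset_eq_degree]; exact hreg x
    rw [commonNbrs] at hc
    omega
  have heq := Finset.eq_of_subset_of_card_le hsub hcard
  have : w ∈ (G.neighborFinset x).erase y := by
    rw [mem_erase]; exact ⟨hwy, (mem_neighborFinset _ _ _).2 hw⟩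
  rw [← heq] at this
  exact ((mem_common G).1 this).2

-- common neighbor from dist 2
lemma common_of_dist2 {x y : V} (hconn : G.Connected) (hd : G.dist x y ≤ 2) (hne : x ≠ y)
    (hnadj : ¬ G.Adj x y) : ∃ w, G.Adj x w ∧ G.Adj y w := by
  have hr : G.Reachable x y := hconn x y
  obtain ⟨p, hp⟩ := hr.exists_walk_length_eq_dist
  have h0 : G.dist x y ≠ 0 := by
    intro h
    exact hne ((hr.dist_eq_zero_iff).1 h)
  have h1 : G.dist x y ≠ 1 := fun h => hnadj (dist_eq_one_iff_adj.1 h)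
  have hl : p.length = 2 := by omega
  refine ⟨p.getVert 1, ?_, ?_⟩
  · have := p.adj_getVert_succ (i := 0) (by omega)
    rwa [SimpleGraph.Walk.getVert_zero] at this
  · have := p.adj_getVert_succ (i := 1) (by omega)
    have h2 : p.getVert 2 = y := by
      rw [← hl]; exact p.getVert_length
    rw [h2] at this
    exact this.symm

lemma even_sum_adj (s : Finset V) : Even (∑ u ∈ s, (s.filter (G.Adj u)).card) := by
  classical
  letI : LinearOrder V := LinearOrder.lift' (Fintype.equivFin V) (Fintype.equivFin V).injective
  set T := (s ×ˢ s).filter fun p => G.Adj p.1 p.2 with hT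
  have h1 : T.card = ∑ u ∈ s, (s.filter (G.Adj u)).card := by
    rw [hT, Finset.card_filter, Finset.sum_product]
    exact Finset.sum_congr rfl fun u _ => (Finset.card_filter _ _).symm
  rw [← h1]
  set T₁ := T.filter fun p => p.1 < p.2 with hT1
  set T₂ := T.filter fun p => p.2 < p.1 with hT2
  have hmemT : ∀ p ∈ T, G.Adj p.1 p.2 ∧ p.1 ∈ s ∧ p.2 ∈ s := by
    intro p hp
    rw [hT, Finset.mem_filter, Finset.mem_product] at hp
    tauto
  have hmemT' : ∀ p : V × V, G.Adj p.1 p.2 → p.1 ∈ s → p.2 ∈ s → p ∈ T := by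
    intro p h1 h2 h3
    rw [hT, Finset.mem_filter, Finset.mem_product]
    exact ⟨⟨h2, h3⟩, h1⟩
  have hunion : T = T₁ ∪ T₂ := by
    ext p
    simp only [hT1, hT2, Finset.mem_union, Finset.mem_filter]
    constructor
    · intro hp
      have hne : p.1 ≠ p.2 := (hmemT p hp).1.ne
      rcases lt_or_gt_of_ne hne with h | h
      · exact Or.inl ⟨hp, h⟩
      · exact Or.inr ⟨hp, h⟩
    · rintro (⟨hp, _⟩ | ⟨hp, _⟩) <;> exact hp
  have hdisj : Disjoint T₁ T₂ := by
    rw [Finset.disjoint_left]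
    rintro p hp1 hp2
    simp only [hT1, Finset.mem_filter] at hp1
    simp only [hT2, Finset.mem_filter] at hp2
    exact absurd hp2.2 (not_lt.2 hp1.2.le)
  have hswap : T₂.card = T₁.card := by
    apply Finset.card_bij (fun p _ => Prod.swap p)
    · intro p hp
      simp only [hT2, Finset.mem_filter] at hp
      obtain ⟨hpT, hlt⟩ := hp
      obtain ⟨hadj, h1', h2'⟩ := hmemT p hpT
      simp only [hT1, Finset.mem_filter]
      exact ⟨hmemT' p.swap hadj.symm h2' h1', hlt⟩
    · intro p _ q _ h
      exact Prod.swap_injective h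
    · intro p hp
      simp only [hT1, Finset.mem_filter] at hp
      obtain ⟨hpT, hlt⟩ := hp
      obtain ⟨hadj, h1', h2'⟩ := hmemT p hpT
      refine ⟨p.swap, ?_, by simp⟩
      simp only [hT2, Finset.mem_filter]
      exact ⟨hmemT' p.swap hadj.symm h2' h1', hlt⟩
  rw [hunion, Finset.card_union_of_disjoint hdisj, hswap]
  exact ⟨T₁.card, by omega⟩

lemma common_eq_filter (v u : V) :
    commonNbrs G v u = ((G.neighborFinset v).filter (G.Adj u)).card := by
  rw [commonNbrs]
  congr 1
  ext w
  simp [mem_neighborFinset, and_comm]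

lemma sum_common {k : ℕ} (hreg : G.IsRegularOfDegree k) (v : V) :
    (∑ u ∈ univ.erase v, commonNbrs G v u) + k = k * k := by
  have h1 : ∑ u ∈ univ.erase v, commonNbrs G v u
      = ∑ w ∈ G.neighborFinset v, ((univ.erase v).filter (fun u => G.Adj u w)).card := by
    calc ∑ u ∈ univ.erase v, commonNbrs G v u
        = ∑ u ∈ univ.erase v, ∑ w ∈ G.neighborFinset v, (if G.Adj u w then 1 else 0) := by
          exact Finset.sum_congr rfl fun u _ => by rw [common_eq_filter, Finset.card_filter]
      _ = ∑ w ∈ G.neighborFinset v, ∑ u ∈ univ.erase v, (if G.Adj u w then 1 else 0) :=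
          Finset.sum_comm
      _ = ∑ w ∈ G.neighborFinset v, ((univ.erase v).filter (fun u => G.Adj u w)).card :=
          Finset.sum_congr rfl fun w _ => (Finset.card_filter _ _).symm
  have h2 : ∀ w ∈ G.neighborFinset v,
      ((univ.erase v).filter (fun u => G.Adj u w)).card + 1 = k := by
    intro w hw
    have hvw : G.Adj v w := (mem_neighborFinset _ _ _).1 hw
    have heq : (univ.erase v).filter (fun u => G.Adj u w) = (G.neighborFinset w).erase v := by
      ext u
      simp only [Finset.mem_filter, Finset.mem_erase, Finset.mem_univ, true_and,
        mem_neighborFinset, G.adj_comm u w]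
      tauto
    rw [heq, Finset.card_erase_of_mem ((mem_neighborFinset _ _ _).2 hvw.symm)]
    have hk : (G.neighborFinset w).card = k := by
      rw [card_neighborFinset_eq_degree]; exact hreg w
    have hpos : 0 < (G.neighborFinset w).card :=
      Finset.card_pos.2 ⟨v, (mem_neighborFinset _ _ _).2 hvw.symm⟩
    omega
  have hkcard : (G.neighborFinset v).card = k := by
    rw [card_neighborFinset_eq_degree]; exact hreg v
  rw [h1]
  calc (∑ w ∈ G.neighborFinset v, ((univ.erase v).filter (fun u => G.Adj u w)).card) + k
      = (∑ w ∈ G.neighborFinset v, (((univ.erase v).filter (fun u => G.Adj u w)).card + 1))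
        + (k - (G.neighborFinset v).card) := by
        rw [Finset.sum_add_distrib, Finset.sum_const, smul_eq_mul, mul_one, hkcard]
        omega
    _ = (∑ w ∈ G.neighborFinset v, k) + 0 := by rw [Finset.sum_congr rfl h2, hkcard]; omega
    _ = k * k := by rw [Finset.sum_const, smul_eq_mul, hkcard]; omega

lemma all_eq_of_sum {α : Type*} {s : Finset α} {f : α → ℕ} {c : ℕ}
    (h : ∀ u ∈ s, c ≤ f u) (hs : ∑ u ∈ s, f u = s.card * c) : ∀ u ∈ s, f u = c := by
  intro u hu
  by_contra hne
  have hlt : c < f u := lt_of_le_of_ne (h u hu) (Ne.symm hne)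
  have hstrict : ∑ _x ∈ s, c < ∑ x ∈ s, f x := Finset.sum_lt_sum h ⟨u, hu, hlt⟩
  rw [Finset.sum_const, smul_eq_mul, hs] at hstrict
  omega

end Helpers

theorem stmt3 {V : Type u} [Fintype V] [DecidableEq V] (G : SimpleGraph V)
    [DecidableRel G.Adj] (n k b a : ℕ)
    (hb : (b : ℤ) = (k : ℤ) - 1) (ha : (a : ℤ) = (k : ℤ) - 2) :
    ¬ IsStrictlyDezaGraph G n k b a := by
  rintro ⟨⟨hbot, hcardV, hreg, hab, hdeza⟩, hconn, hdiam, ⟨x0, y0, hd2⟩, hnsrg⟩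
  have hk : k = a + 2 := by omega
  have hb2 : b = a + 1 := by omega
  subst hk hb2
  clear hb ha hab hbot
  have hxy_ne : x0 ≠ y0 := by rintro rfl; rw [SimpleGraph.dist_self] at hd2; omega
  have hxy_nadj : ¬ G.Adj x0 y0 := by
    intro h
    have := SimpleGraph.dist_eq_one_iff_adj.2 h
    omega
  have hdeg : ∀ v : V, (G.neighborFinset v).card = a + 2 := fun v => by
    rw [card_neighborFinset_eq_degree]; exact hreg v
  have hsub : ∀ v : V, G.neighborFinset v ⊆ univ.erase v := by
    intro v u hu
    rw [Finset.mem_erase]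
    exact ⟨(G.ne_of_adj ((mem_neighborFinset _ _ _).1 hu)).symm, Finset.mem_univ u⟩
  set tset : V → Finset V := fun v => (univ.erase v) \ G.neighborFinset v with htset
  have ht_mem : ∀ v u : V, u ∈ tset v ↔ u ≠ v ∧ ¬ G.Adj v u := by
    intro v u
    simp only [htset, Finset.mem_sdiff, Finset.mem_erase, Finset.mem_univ, and_true, true_and,
      mem_neighborFinset]
  have ht_card : ∀ v : V, (tset v).card + (a + 3) = n := by
    intro v
    have h1 : (tset v).card = (univ.erase v).card - (G.neighborFinset v).card :=
      Finset.card_sdiff_of_subset (hsub v)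
    have h2 : (univ.erase v).card + 1 = Fintype.card V := by
      rw [Finset.card_erase_of_mem (Finset.mem_univ v), Finset.card_univ]
      have : 0 < Fintype.card V := Fintype.card_pos_iff.2 ⟨v⟩
      omega
    have h3 := Finset.card_le_card (hsub v)
    rw [hdeg v] at h1 h3
    omega
  set β : V → ℕ :=
    fun v => ((G.neighborFinset v).filter (fun u => commonNbrs G v u = a + 1)).card with hβ
  have hsplit : ∀ v : V, ∑ u ∈ G.neighborFinset v, commonNbrs G v u = a * (a + 2) + β v := by
    intro v
    have he : ∀ u ∈ G.neighborFinset v,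
        commonNbrs G v u = a + (if commonNbrs G v u = a + 1 then 1 else 0) := by
      intro u hu
      have hne : v ≠ u := G.ne_of_adj ((mem_neighborFinset _ _ _).1 hu)
      rcases hdeza v u hne with h | h <;> simp [h]
    rw [Finset.sum_congr rfl he, Finset.sum_add_distrib, Finset.sum_const, smul_eq_mul,
      hdeg v, ← Finset.card_filter, hβ, mul_comm]
  have hparity : ∀ v : V, Even (a * (a + 2) + β v) := by
    intro v
    rw [← hsplit v]
    rw [Finset.sum_congr rfl (fun u _ => common_eq_filter G v u)]
    exact even_sum_adj G _
  have hsum_t : ∀ v : V, (∑ u ∈ tset v, commonNbrs G v u) + β v = a + 2 := by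
    intro v
    have h1 := sum_common G hreg v
    have h2 : (∑ u ∈ tset v, commonNbrs G v u) + ∑ u ∈ G.neighborFinset v, commonNbrs G v u
        = ∑ u ∈ univ.erase v, commonNbrs G v u := Finset.sum_sdiff (hsub v)
    have h3 := hsplit v
    have h4 : (a + 2) * (a + 2) = a * (a + 2) + (a + 2) + (a + 2) := by ring
    linarith
  have hterm : ∀ v u : V, u ∈ tset v →
      (commonNbrs G v u = a + 1 ∨ commonNbrs G v u = a) ∧ 1 ≤ commonNbrs G v u := by
    intro v u hu
    rw [ht_mem] at hu
    obtain ⟨hne, hnadj⟩ := hu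
    refine ⟨hdeza v u (Ne.symm hne), ?_⟩
    obtain ⟨w, hw1, hw2⟩ := common_of_dist2 G hconn (hdiam v u) (Ne.symm hne) hnadj
    exact Finset.card_pos.2 ⟨w, (mem_common G).2 ⟨hw1, hw2⟩⟩
  have hsrg : ∀ ℓ μ : ℕ, (∀ x y : V, G.Adj x y → commonNbrs G x y = ℓ) →
      (∀ x y : V, x ≠ y → ¬G.Adj x y → commonNbrs G x y = μ) → False := by
    intro ℓ μ h1 h2
    refine hnsrg ⟨ℓ, μ, hcardV, hreg, ?_, ?_⟩
    · intro v w h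
      rw [common_eq_card]; exact h1 v w h
    · intro v w hne h
      rw [common_eq_card]; exact h2 v w hne h
  have hy0t : y0 ∈ tset x0 := (ht_mem x0 y0).2 ⟨Ne.symm hxy_ne, hxy_nadj⟩
  have hm1 : 1 ≤ (tset x0).card := Finset.card_pos.2 ⟨y0, hy0t⟩
  rcases Nat.lt_or_ge (tset x0).card 2 with hmlt | hm2
  · -- exactly one non-neighbour : closed neighbourhoods coincide, too many common nbrs
    have hm : (tset x0).card = 1 := by omega
    obtain ⟨z, hz⟩ := Finset.card_eq_one.1 hm
    have hy0z : tset x0 = {y0} := by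
      rw [hz] at hy0t ⊢
      rw [Finset.mem_singleton] at hy0t
      rw [hy0t]
    have hmy : (tset y0).card = 1 := by
      have := ht_card x0; have := ht_card y0; omega
    obtain ⟨z', hz'⟩ := Finset.card_eq_one.1 hmy
    have hx0t : x0 ∈ tset y0 := (ht_mem y0 x0).2 ⟨hxy_ne, fun h => hxy_nadj h.symm⟩
    have hx0z : tset y0 = {x0} := by
      rw [hz'] at hx0t ⊢
      rw [Finset.mem_singleton] at hx0t
      rw [hx0t]
    have hNx : G.neighborFinset x0 = (univ.erase x0) \ {y0} := by
      rw [← hy0z, htset]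
      exact (Finset.sdiff_sdiff_eq_self (hsub x0)).symm
    have hNy : G.neighborFinset y0 = (univ.erase y0) \ {x0} := by
      rw [← hx0z, htset]
      exact (Finset.sdiff_sdiff_eq_self (hsub y0)).symm
    have hNN : G.neighborFinset x0 = G.neighborFinset y0 := by
      rw [hNx, hNy]
      ext u
      simp only [Finset.mem_sdiff, Finset.mem_erase, Finset.mem_univ, true_and, and_true,
        Finset.mem_singleton]
      tauto
    have hcc : commonNbrs G x0 y0 = a + 2 := by
      rw [commonNbrs, hNN, Finset.inter_self]
      exact hdeg y0
    rcases hdeza x0 y0 hxy_ne with h | h <;> omega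
  · -- at least two non-neighbours for every vertex
    have hm2' : ∀ v : V, 2 ≤ (tset v).card := by
      intro v
      have := ht_card v; have := ht_card x0; omega
    have hlow : ∀ v : V, (tset v).card * a + β v ≤ a + 2 ∧ (tset v).card + β v ≤ a + 2 := by
      intro v
      have h1 : (tset v).card • a ≤ ∑ u ∈ tset v, commonNbrs G v u :=
        Finset.card_nsmul_le_sum _ _ _ (fun u hu => by
          rcases (hterm v u hu).1 with h | h <;> omega)
      have h2 : (tset v).card • 1 ≤ ∑ u ∈ tset v, commonNbrs G v u :=
        Finset.card_nsmul_le_sum _ _ _ (fun u hu => (hterm v u hu).2)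
      have h3 := hsum_t v
      rw [smul_eq_mul] at h1
      rw [smul_eq_mul, mul_one] at h2
      omega
    have hβ_zero : ∀ v, β v = 0 → ∀ y, G.Adj v y → commonNbrs G v y ≠ a + 1 := by
      intro v h0 y hy hc
      simp only [hβ] at h0
      have hemp := Finset.card_eq_zero.1 h0
      have : y ∈ (G.neighborFinset v).filter (fun u => commonNbrs G v u = a + 1) :=
        Finset.mem_filter.2 ⟨(mem_neighborFinset _ _ _).2 hy, hc⟩
      rw [hemp] at this
      exact absurd this (Finset.notMem_empty y)
    have hβ_one : ∀ v, β v = 1 → ∃ u, G.Adj v u ∧ commonNbrs G v u = a + 1 ∧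
        ∀ w, G.Adj v w → commonNbrs G v w = a + 1 → w = u := by
      intro v h1
      simp only [hβ] at h1
      obtain ⟨u, hu⟩ := Finset.card_eq_one.1 h1
      have hum : u ∈ (G.neighborFinset v).filter (fun w => commonNbrs G v w = a + 1) := by
        rw [hu]; exact Finset.mem_singleton_self u
      rw [Finset.mem_filter, mem_neighborFinset] at hum
      refine ⟨u, hum.1, hum.2, ?_⟩
      intro w hw hcw
      have hwm : w ∈ (G.neighborFinset v).filter (fun w => commonNbrs G v w = a + 1) :=
        Finset.mem_filter.2 ⟨(mem_neighborFinset _ _ _).2 hw, hcw⟩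
      rw [hu, Finset.mem_singleton] at hwm
      exact hwm
    have haa : a ≤ 2 := by
      have h := (hlow x0).1
      have h2 := hm2' x0
      have h3 : 2 * a ≤ (tset x0).card * a := Nat.mul_le_mul_right a h2
      omega
    interval_cases a
    · -- a = 0, k = 2 : graph is SRG(n,2,0,1)
      have hβ0 : ∀ v, β v = 0 := fun v => by
        have := (hlow v).2; have := hm2' v; omega
      refine hsrg 0 1 ?_ ?_
      · intro x y hadj
        have hne1 := hβ_zero x (hβ0 x) y hadj
        rcases hdeza x y (G.ne_of_adj hadj) with h | h <;> omega
      · intro x y hne hnadj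
        have hyt : y ∈ tset x := (ht_mem x y).2 ⟨Ne.symm hne, hnadj⟩
        have := hterm x y hyt
        omega
    · -- a = 1, k = 3 : the structural case
      have hβ1 : ∀ v, β v = 1 := by
        intro v
        have hp := hparity v
        have hle := (hlow v).2
        have hm := hm2' v
        rcases hp with ⟨t, ht'⟩
        omega
      have hget : ∀ v : V, ∃ u, G.Adj v u ∧ commonNbrs G v u = 2 ∧
          ∀ w, G.Adj v w → commonNbrs G v w = 2 → w = u := by
        intro v
        obtain ⟨u, h1, h2, h3⟩ := hβ_one v (hβ1 v)
        exact ⟨u, h1, by omega, fun w hw hcw => h3 w hw (by omega)⟩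
      obtain ⟨u, hvu, hcvu, huniq⟩ := hget x0
      have twin_vu : ∀ w, G.Adj x0 w → w ≠ u → G.Adj u w :=
        twin G hreg hvu (by omega)
      have herase : ((G.neighborFinset x0).erase u).card = 2 := by
        rw [Finset.card_erase_of_mem ((mem_neighborFinset _ _ _).2 hvu), hdeg]
      obtain ⟨w, z, hwzne, hwzeq⟩ := Finset.card_eq_two.1 herase
      have hwmem : w ∈ (G.neighborFinset x0).erase u := by
        rw [hwzeq]; exact Finset.mem_insert_self _ _
      have hzmem : z ∈ (G.neighborFinset x0).erase u := by
        rw [hwzeq]; exact Finset.mem_insert_of_mem (Finset.mem_singleton_self z)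
      rw [Finset.mem_erase, mem_neighborFinset] at hwmem hzmem
      obtain ⟨hwu, hvw⟩ := hwmem
      obtain ⟨hzu, hvz⟩ := hzmem
      have hwx0 : w ≠ x0 := (G.ne_of_adj hvw).symm
      have hcvw : commonNbrs G x0 w = 1 := by
        rcases hdeza x0 w (Ne.symm hwx0) with h | h
        · exact absurd (huniq w hvw (by omega)) hwu
        · omega
      have hadj_uw : G.Adj u w := twin_vu w hvw hwu
      have hadj_uz : G.Adj u z := twin_vu z hvz hzu
      obtain ⟨w', hww', hcww', huniqw⟩ := hget w
      have hw'v : w' ≠ x0 := by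
        intro h
        rw [h, commonNbrs_comm] at hcww'
        omega
      have hw'u : w' ≠ u := by
        intro h
        rw [h] at hcww'
        obtain ⟨u', hu1, hu2, hu3⟩ := hget u
        have h1 : x0 = u' := hu3 x0 hvu.symm (by rw [commonNbrs_comm]; omega)
        have h2 : w = u' := hu3 w hadj_uw (by rw [commonNbrs_comm]; omega)
        exact hwx0 (by rw [h2, ← h1])
      have twin_ww' : ∀ x, G.Adj w x → x ≠ w' → G.Adj w' x :=
        twin G hreg hww' (by omega)
      have hadj_w'v : G.Adj w' x0 := twin_ww' x0 hvw.symm (Ne.symm hw'v)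
      have hw'Nv : w' ∈ (G.neighborFinset x0).erase u := by
        rw [Finset.mem_erase, mem_neighborFinset]
        exact ⟨hw'u, hadj_w'v.symm⟩
      rw [hwzeq, Finset.mem_insert, Finset.mem_singleton] at hw'Nv
      have hw'w : w' ≠ w := (G.ne_of_adj hww').symm
      have hw'z : w' = z := by tauto
      rw [hw'z] at hww'
      have hsubuz : ({u, z} : Finset V) ⊆ G.neighborFinset x0 ∩ G.neighborFinset w := by
        intro p hp
        rw [Finset.mem_insert, Finset.mem_singleton] at hp
        rcases hp with rfl | rfl
        · exact (mem_common G).2 ⟨hvu, hadj_uw.symm⟩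
        · exact (mem_common G).2 ⟨hvz, hww'⟩
      have hcard_uz : ({u, z} : Finset V).card = 2 := by
        rw [Finset.card_insert_of_notMem (by simp [Ne.symm hzu]), Finset.card_singleton]
      have hle2 := Finset.card_le_card hsubuz
      rw [hcard_uz] at hle2
      have : 2 ≤ commonNbrs G x0 w := hle2
      omega
    · -- a = 2, k = 4 : graph is SRG(n,4,2,2)
      have hβ0 : ∀ v, β v = 0 := by
        intro v
        have h1 := (hlow v).1
        have h2 := hm2' v
        have h3 : 2 * 2 ≤ (tset v).card * 2 := Nat.mul_le_mul_right 2 h2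
        omega
      have hcard2 : ∀ v, (tset v).card = 2 := by
        intro v
        have h1 := (hlow v).1
        have h2 := hm2' v
        have h3 := hβ0 v
        omega
      refine hsrg 2 2 ?_ ?_
      · intro x y hadj
        have hne1 := hβ_zero x (hβ0 x) y hadj
        rcases hdeza x y (G.ne_of_adj hadj) with h | h <;> omega
      · intro x y hne hnadj
        have hyt : y ∈ tset x := (ht_mem x y).2 ⟨Ne.symm hne, hnadj⟩
        have hsum := hsum_t x
        rw [hβ0 x] at hsum
        have hall := all_eq_of_sum (s := tset x) (f := commonNbrs G x) (c := 2)
          (fun u hu => by rcases (hterm x u hu).1 with h | h <;> omega)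
          (by rw [hcard2 x]; omega)
        exact hall y hyt
end

section
/- Let Γ be a strictly Deza graph with parameters (n, k, b, a) with k = b + 1 and β(v) > 1 for every vertex v. If v is a vertex of type (B) or of type (C), then for every vertex u ∈ N(v) \ B(v), B[u] ⊆ N(v) \ B(v). -/
open Finset SimpleGraph

universe u v

lemma cn_comm {V : Type u} [Fintype V] [DecidableEq V] (G : SimpleGraph V)
    [DecidableRel G.Adj] (x y : V) : commonNbrs G x y = commonNbrs G y x := by
  rw [commonNbrs, commonNbrs, inter_comm]

lemma card_commonNbrs {V : Type u} [Fintype V] [DecidableEq V] (G : SimpleGraph V)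
    [DecidableRel G.Adj] (x y : V) :
    Fintype.card (G.commonNeighbors x y) = commonNbrs G x y := by
  rw [commonNbrs, ← Set.toFinset_card]
  congr 1
  ext z
  simp only [Set.mem_toFinset]
  simp [SimpleGraph.commonNeighbors]

/-- Twin lemma: if `s ∈ N(x)` and `s, x` have `b = k - 1` common neighbours, then
`N(s) = {x} ∪ (N(x) \ {s})`. -/
lemma twin_lemma {V : Type u} [Fintype V] [DecidableEq V] (G : SimpleGraph V)
    [DecidableRel G.Adj] {k b : ℕ} (hreg : G.IsRegularOfDegree k) (hk : k = b + 1)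
    {s x : V} (hb : commonNbrs G s x = b) (hsx : s ∈ G.neighborFinset x) :
    G.neighborFinset s = insert x (G.neighborFinset x \ {s}) := by
  have hxs : x ∈ G.neighborFinset s := by
    rw [SimpleGraph.mem_neighborFinset] at hsx ⊢; exact hsx.symm
  have hcardI : (G.neighborFinset s ∩ G.neighborFinset x).card = b := hb
  have hcards : (G.neighborFinset s).card = k := hreg s
  have hcardx : (G.neighborFinset x).card = k := hreg x
  have hsub1 : G.neighborFinset s ∩ G.neighborFinset x ⊆ G.neighborFinset x \ {s} := by
    intro z hz
    rw [mem_inter] at hz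
    rw [mem_sdiff, mem_singleton]
    refine ⟨hz.2, ?_⟩
    rintro rfl
    exact SimpleGraph.notMem_neighborFinset_self G z hz.1
  have hsub2 : G.neighborFinset s ∩ G.neighborFinset x ⊆ G.neighborFinset s \ {x} := by
    intro z hz
    rw [mem_inter] at hz
    rw [mem_sdiff, mem_singleton]
    refine ⟨hz.1, ?_⟩
    rintro rfl
    exact SimpleGraph.notMem_neighborFinset_self G z hz.2
  have hc1 : (G.neighborFinset x \ {s}).card = b := by
    rw [card_sdiff_of_subset (by simpa using hsx), card_singleton, hcardx, hk]; omega
  have hc2 : (G.neighborFinset s \ {x}).card = b := by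
    rw [card_sdiff_of_subset (by simpa using hxs), card_singleton, hcards, hk]; omega
  have he1 : G.neighborFinset s ∩ G.neighborFinset x = G.neighborFinset x \ {s} :=
    Finset.eq_of_subset_of_card_le hsub1 (by rw [hc1, hcardI])
  have he2 : G.neighborFinset s ∩ G.neighborFinset x = G.neighborFinset s \ {x} :=
    Finset.eq_of_subset_of_card_le hsub2 (by rw [hc2, hcardI])
  have : insert x (G.neighborFinset s \ {x}) = G.neighborFinset s := by
    rw [sdiff_singleton_eq_erase, insert_erase hxs]
  rw [← this, ← he2, he1]

theorem stmt15 {V : Type u} [Fintype V] [DecidableEq V] (G : SimpleGraph V)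
    [DecidableRel G.Adj] (n k b a : ℕ)
    (hG : IsStrictlyDezaGraph G n k b a) (hk : k = b + 1)
    (hβ : ∀ v : V, 1 < (dezaB G b v).card) :
    ∀ x : V, (IsTypeB G b x ∨ IsTypeC G b x) →
      ∀ u ∈ G.neighborFinset x \ dezaB G b x,
        dezaBc G b u ⊆ G.neighborFinset x \ dezaB G b x := by
  obtain ⟨⟨hne, hcard, hreg, hab, hdeza⟩, hconn, hdiam, hd2, hnsrg⟩ := hG
  have hba : a < b := by
    rcases lt_or_eq_of_le hab with h | h
    · exact h
    · exfalso
      refine hnsrg ⟨b, b, hcard, hreg, ?_, ?_⟩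
      · intro v w hvw
        rw [card_commonNbrs]
        rcases hdeza v w hvw.ne with h1 | h1
        · exact h1
        · rw [h1, h]
      · intro v w hvw _
        rw [card_commonNbrs]
        rcases hdeza v w hvw with h1 | h1
        · exact h1
        · rw [h1, h]
  intro x hx u hu
  rw [mem_sdiff] at hu
  obtain ⟨huN, huB⟩ := hu
  have hux : u ≠ x := by
    rintro rfl
    exact SimpleGraph.notMem_neighborFinset_self G u huN
  have hua : commonNbrs G u x = a := by
    rcases hdeza u x hux with h | h
    · exfalso
      exact huB (by rw [dezaB, mem_filter]; exact ⟨mem_univ u, hux, h⟩)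
    · exact h
  -- a vertex s in B(x) ∩ N(x)
  obtain ⟨s, hs⟩ : (dezaB G b x ∩ G.neighborFinset x).Nonempty := by
    rcases hx with hx | hx
    · rw [inter_eq_left.mpr hx]
      exact card_pos.mp (by have := hβ x; omega)
    · exact card_pos.mp (by rw [hx]; norm_num)
  rw [mem_inter] at hs
  obtain ⟨hsB, hsN⟩ := hs
  have hsb : commonNbrs G s x = b := ((mem_filter.mp hsB).2).2
  have hNs : G.neighborFinset s = insert x (G.neighborFinset x \ {s}) :=
    twin_lemma G hreg hk hsb hsN
  have hsu : u ≠ s := by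
    rintro rfl
    exact huB hsB
  have huNs : u ∈ G.neighborFinset s := by
    rw [hNs, mem_insert, mem_sdiff, mem_singleton]
    exact Or.inr ⟨huN, hsu⟩
  have hsNu : s ∈ G.neighborFinset u := by
    rw [SimpleGraph.mem_neighborFinset] at huNs ⊢
    exact huNs.symm
  have hxNu : x ∈ G.neighborFinset u := by
    rw [SimpleGraph.mem_neighborFinset] at huN ⊢
    exact huN.symm
  have hsx : s ≠ x := by
    rintro rfl
    exact SimpleGraph.notMem_neighborFinset_self G s hsN
  intro t ht
  rw [dezaBc, mem_insert] at ht
  rcases ht with rfl | htB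
  · exact mem_sdiff.mpr ⟨huN, huB⟩
  obtain ⟨htu, htb⟩ := (mem_filter.mp htB).2
  have htbc : (G.neighborFinset t ∩ G.neighborFinset u).card = b := htb
  have htbc' : (G.neighborFinset u ∩ G.neighborFinset t).card = b := by
    rw [inter_comm]; exact htbc
  have htx : t ≠ x := by
    rintro rfl
    rw [cn_comm] at htb
    rw [dezaB, mem_filter] at huB
    exact huB ⟨mem_univ u, hux, htb⟩
  -- Step A: t ∈ N(x)
  have hstepA : t ∈ G.neighborFinset x := by
    by_contra hnt
    have hxdiff : x ∈ G.neighborFinset u \ G.neighborFinset t := by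
      rw [mem_sdiff]
      refine ⟨hxNu, fun h => hnt ?_⟩
      rw [SimpleGraph.mem_neighborFinset] at h ⊢
      exact h.symm
    have hcdiff : (G.neighborFinset u \ G.neighborFinset t).card = 1 := by
      have h1 := Finset.card_sdiff_add_card_inter (G.neighborFinset u) (G.neighborFinset t)
      rw [htbc', show (G.neighborFinset u).card = k from hreg u] at h1
      omega
    have hsNt : s ∈ G.neighborFinset t := by
      by_contra hns
      have hsdiff : s ∈ G.neighborFinset u \ G.neighborFinset t :=
        mem_sdiff.mpr ⟨hsNu, hns⟩
      have hsub : ({s, x} : Finset V) ⊆ G.neighborFinset u \ G.neighborFinset t := by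
        intro z hz
        rw [mem_insert, mem_singleton] at hz
        rcases hz with rfl | rfl
        · exact hsdiff
        · exact hxdiff
      have := Finset.card_le_card hsub
      rw [Finset.card_pair hsx, hcdiff] at this
      omega
    have htNs : t ∈ G.neighborFinset s := by
      rw [SimpleGraph.mem_neighborFinset] at hsNt ⊢
      exact hsNt.symm
    rw [hNs, mem_insert, mem_sdiff, mem_singleton] at htNs
    rcases htNs with rfl | ⟨h1, _⟩
    · exact htx rfl
    · exact hnt h1
  -- Step B: t ∉ B(x)
  have hstepB : t ∉ dezaB G b x := by
    intro htBx
    have htbx : commonNbrs G t x = b := ((mem_filter.mp htBx).2).2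
    have hNt : G.neighborFinset t = insert x (G.neighborFinset x \ {t}) :=
      twin_lemma G hreg hk htbx hstepA
    have hut : u ≠ t := fun h => htu (h.symm)
    have htNu : t ∈ G.neighborFinset u := by
      have : u ∈ G.neighborFinset t := by
        rw [hNt, mem_insert, mem_sdiff, mem_singleton]
        exact Or.inr ⟨huN, hut⟩
      rw [SimpleGraph.mem_neighborFinset] at this ⊢
      exact this.symm
    have hxNx : x ∉ G.neighborFinset x := SimpleGraph.notMem_neighborFinset_self G x
    have key : G.neighborFinset t ∩ G.neighborFinset u
        = insert x ((G.neighborFinset x ∩ G.neighborFinset u).erase t) := by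
      rw [hNt]
      ext z
      simp only [mem_insert, mem_inter, mem_sdiff, mem_singleton, mem_erase]
      constructor
      · rintro ⟨rfl | ⟨hz1, hz2⟩, hz3⟩
        · exact Or.inl rfl
        · exact Or.inr ⟨hz2, hz1, hz3⟩
      · rintro (rfl | ⟨hz1, hz2, hz3⟩)
        · exact ⟨Or.inl rfl, hxNu⟩
        · exact ⟨Or.inr ⟨hz2, hz1⟩, hz3⟩
    have hmemxt : t ∈ G.neighborFinset x ∩ G.neighborFinset u :=
      mem_inter.mpr ⟨hstepA, htNu⟩
    have hxnotin : x ∉ (G.neighborFinset x ∩ G.neighborFinset u).erase t := by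
      intro h
      exact hxNx (mem_inter.mp (mem_of_mem_erase h)).1
    have hcxu : (G.neighborFinset x ∩ G.neighborFinset u).card = a := by
      rw [inter_comm]; exact hua
    have : b = a := by
      rw [← htbc, key, card_insert_of_notMem hxnotin, card_erase_of_mem hmemxt, hcxu]
      have ha1 : 1 ≤ a := by rw [← hcxu]; exact card_pos.mpr ⟨t, hmemxt⟩
      omega
    omega
  exact mem_sdiff.mpr ⟨hstepA, hstepB⟩
end
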